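/- Let X be a set and (f_i) a sequence of functions from X to [0,1]. Suppose there exist a natural number N and a set E ⊆ {1,...,N} such that for every choice of indices i_1 < i_2 < ... < i_N and all real numbers r < s, there is no x ∈ X with f_{i_j}(x) ≤ r for all j ∈ E and f_{i_j}(x) ≥ s for all j ∈ {1,...,N} \ E. Then for all x ∈ X, the sum ∑_{i=1}^∞ |f_i(x) − f_{i+1}(x)| ≤ 2N − 2. -/

import Mathlib

open Filter Topology

private lemma aux_card {a : ℕ → ℝ} {N : ℕ} (hN : 1 ≤ N)
    (habs : ∀ g : Fin (2*N) → ℕ, StrictMono g → ∀ r s : ℝ, r < s → ∀ b : ℕ, b ≤ 1 →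
      ¬ (∀ k : Fin (2*N), ((k.val + b) % 2 = 0 → a (g k) ≤ r) ∧
          ((k.val + b) % 2 = 1 → s ≤ a (g k))))
    (t : ℝ) (n : ℕ) :
    ((Finset.range n).filter
      (fun i => a i < t ∧ t ≤ a (i+1) ∨ a (i+1) < t ∧ t ≤ a i)).card ≤ 2*N - 2 := by
  classical
  by_contra hcon
  push_neg at hcon
  set S := (Finset.range n).filter
      (fun i => a i < t ∧ t ≤ a (i+1) ∨ a (i+1) < t ∧ t ≤ a i) with hS
  have hm : 2*N - 1 ≤ S.card := by omega
  have h0m : 0 < S.card := by omega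
  set eo := S.orderIsoOfFin rfl with heo
  set eN : ℕ → ℕ := fun k => if h : k < S.card then (eo ⟨k, h⟩ : ℕ) else 0 with heN
  have eNval : ∀ k, ∀ h : k < S.card, eN k = (eo ⟨k, h⟩ : ℕ) := by
    intro k h
    simp only [heN, dif_pos h]
  have eNmem : ∀ k, k < S.card → eN k ∈ S := by
    intro k h
    rw [eNval k h]
    exact (eo ⟨k, h⟩).2
  have eNmono : ∀ k1 k2, k1 < k2 → k2 < S.card → eN k1 < eN k2 := by
    intro k1 k2 h hk2
    rw [eNval k1 (by omega), eNval k2 hk2]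
    exact Subtype.coe_lt_coe.mpr (eo.strictMono (by exact Fin.mk_lt_mk.mpr h))
  have eNcons : ∀ k, k + 1 < S.card → ∀ j ∈ S, ¬(eN k < j ∧ j < eN (k+1)) := by
    intro k hk j hj hboth
    obtain ⟨h1, h2⟩ := hboth
    obtain ⟨k', hk'⟩ := eo.surjective ⟨j, hj⟩
    have hj' : eN k'.val = j := by
      rw [eNval k'.val k'.isLt, Fin.eta, hk']
    have hlt1 : k < k'.val := by
      rcases lt_trichotomy k k'.val with h | h | h
      · exact h
      · exfalso; rw [← h] at hj'; omega
      · exfalso; have := eNmono k'.val k h (by omega); omega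
    have hlt2 : k'.val < k+1 := by
      rcases lt_trichotomy k'.val (k+1) with h | h | h
      · exact h
      · exfalso; rw [h] at hj'; omega
      · exfalso; have := eNmono (k+1) k'.val h k'.isLt; omega
    omega
  have eNlt : ∀ k, k < S.card → eN k < n := by
    intro k hk
    have := eNmem k hk
    rw [hS, Finset.mem_filter, Finset.mem_range] at this
    exact this.1
  have eNstrad : ∀ k, k < S.card →
      (a (eN k) < t ∧ t ≤ a (eN k + 1) ∨ a (eN k + 1) < t ∧ t ≤ a (eN k)) := by
    intro k hk
    have := eNmem k hk
    rw [hS, Finset.mem_filter] at this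
    exact this.2
  have hns : ∀ j, j < n → j ∉ S → (t ≤ a (j+1) ↔ t ≤ a j) := by
    intro j hjn hjS
    have hst : ¬ (a j < t ∧ t ≤ a (j+1) ∨ a (j+1) < t ∧ t ≤ a j) := by
      intro h
      exact hjS (Finset.mem_filter.mpr ⟨Finset.mem_range.mpr hjn, h⟩)
    push_neg at hst
    constructor
    · intro h
      by_contra h'
      exact absurd h (not_le.mpr (hst.1 (lt_of_not_ge h')))
    · intro h
      by_contra h'
      exact absurd h (not_le.mpr (hst.2 (lt_of_not_ge h')))
  have hconst : ∀ k, k + 1 < S.card → ∀ d, eN k + 1 + d ≤ eN (k+1) →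
      (t ≤ a (eN k + 1 + d) ↔ t ≤ a (eN k + 1)) := by
    intro k hk d
    induction d with
    | zero => intro _; rfl
    | succ d ih =>
      intro hd
      set p := eN k + 1 + d with hp
      have hplt : p < eN (k+1) := by omega
      have hpn : p < n := lt_trans hplt (eNlt _ hk)
      have hpS : p ∉ S := by
        intro hmem
        exact eNcons k hk p hmem ⟨by omega, hplt⟩
      have hre : eN k + 1 + (d+1) = p + 1 := by omega
      rw [hre, hns p hpn hpS]
      exact ih (by omega)
  have econsec : ∀ k, k + 1 < S.card → (t ≤ a (eN (k+1)) ↔ t ≤ a (eN k + 1)) := by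
    intro k hk
    have hlt : eN k < eN (k+1) := eNmono k (k+1) (by omega) hk
    have hre : eN (k+1) = eN k + 1 + (eN (k+1) - (eN k + 1)) := by omega
    rw [hre]
    exact hconst k hk _ (by omega)
  set q : ℕ → ℕ := fun k => if k = 0 then eN 0 else eN (k-1) + 1 with hq
  set b : ℕ := if t ≤ a (eN 0) then 1 else 0 with hbdef
  have hb : b ≤ 1 := by rw [hbdef]; split <;> omega
  have halt : ∀ j, j < 2*N → (t ≤ a (q j) ↔ (j + b) % 2 = 1) := by
    intro j
    induction j with
    | zero =>
      intro _
      by_cases h : t ≤ a (eN 0) <;> simp [hq, hbdef, h]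
    | succ j ih =>
      intro hj
      have hjm : j < S.card := by omega
      have hq1 : q (j+1) = eN j + 1 := by simp [hq]
      have hflip : t ≤ a (eN j + 1) ↔ ¬ t ≤ a (eN j) := by
        rcases eNstrad j hjm with ⟨h1, h2⟩ | ⟨h1, h2⟩
        · simp [h2, not_le.mpr h1]
        · simp [not_le.mpr h1, h2]
      have hstep : t ≤ a (eN j) ↔ t ≤ a (q j) := by
        cases j with
        | zero => simp [hq]
        | succ j' =>
          have hre : q (j'+1) = eN j' + 1 := by simp [hq]
          rw [hre]
          exact econsec j' hjm
      rw [hq1, hflip, hstep, ih (by omega)]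
      omega
  have h2N : 1 < 2*N := by omega
  have hlow : a (q b) < t := by
    rw [← not_le]
    intro hcon2
    have := (halt b (by omega)).mp hcon2
    omega
  have hlowmem : (⟨b, by omega⟩ : Fin (2*N)) ∈
      Finset.univ.filter (fun k : Fin (2*N) => a (q k.val) < t) :=
    Finset.mem_filter.mpr ⟨Finset.mem_univ _, hlow⟩
  set r : ℝ := (Finset.univ.filter (fun k : Fin (2*N) => a (q k.val) < t)).sup'
      ⟨_, hlowmem⟩ (fun k => a (q k.val)) with hr
  have hrt : r < t := by
    rw [hr]
    apply (Finset.sup'_lt_iff _).mpr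
    intro k hk
    exact (Finset.mem_filter.mp hk).2
  have hler : ∀ k : Fin (2*N), a (q k.val) < t → a (q k.val) ≤ r := by
    intro k hk
    exact Finset.le_sup' (fun k : Fin (2*N) => a (q k.val))
      (Finset.mem_filter.mpr ⟨Finset.mem_univ _, hk⟩)
  have hqmono : StrictMono (fun k : Fin (2*N) => q k.val) := by
    intro k1 k2 hlt
    have h1 := k1.isLt
    have h2 := k2.isLt
    have hlt' : k1.val < k2.val := hlt
    simp only [hq]
    have hk2 : ¬ (k2.val = 0) := by omega
    rw [if_neg hk2]
    by_cases hk1 : k1.val = 0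
    · rw [if_pos hk1]
      rcases Nat.eq_or_lt_of_le (Nat.one_le_iff_ne_zero.mpr hk2) with h | h
      · have hre : k2.val - 1 = 0 := by omega
        rw [hre]
        omega
      · have := eNmono 0 (k2.val - 1) (by omega) (by omega)
        omega
    · rw [if_neg hk1]
      have := eNmono (k1.val - 1) (k2.val - 1) (by omega) (by omega)
      omega
  exact habs (fun k : Fin (2*N) => q k.val) hqmono r t hrt b hb
    (fun k => ⟨fun hpar => by
      apply hler
      rw [← not_le]
      intro hc
      have := (halt k.val k.isLt).mp hc
      omega,
      fun hpar => (halt k.val k.isLt).mpr hpar⟩)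

private lemma aux_sum {a : ℕ → ℝ} (ha : ∀ i, a i ∈ Set.Icc (0:ℝ) 1) {c : ℕ}
    (hcard : ∀ t : ℝ, ∀ n : ℕ, ((Finset.range n).filter
      (fun i => a i < t ∧ t ≤ a (i+1) ∨ a (i+1) < t ∧ t ≤ a i)).card ≤ c)
    (n : ℕ) : ∑ i ∈ Finset.range n, |a i - a (i+1)| ≤ (c : ℝ) := by
  classical
  set A : ℕ → Set ℝ := fun i => Set.Ioc (min (a i) (a (i+1))) (max (a i) (a (i+1))) with hA
  have hmeas : ∀ i, MeasurableSet (A i) := fun i => measurableSet_Ioc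
  have hmemA : ∀ t i, t ∈ A i ↔ (a i < t ∧ t ≤ a (i+1) ∨ a (i+1) < t ∧ t ≤ a i) := by
    intro t i
    simp only [hA, Set.mem_Ioc, min_lt_iff, le_max_iff]
    constructor
    · rintro ⟨h1 | h1, h2 | h2⟩
      · exact absurd (lt_of_lt_of_le h1 h2) (lt_irrefl _)
      · exact Or.inl ⟨h1, h2⟩
      · exact Or.inr ⟨h1, h2⟩
      · exact absurd (lt_of_lt_of_le h1 h2) (lt_irrefl _)
    · rintro (⟨h1, h2⟩ | ⟨h1, h2⟩)
      · exact ⟨Or.inl h1, Or.inr h2⟩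
      · exact ⟨Or.inr h1, Or.inl h2⟩
  have hvol : ∀ i, MeasureTheory.volume (A i) = ENNReal.ofReal (|a i - a (i+1)|) := by
    intro i
    rw [hA]
    rw [Real.volume_Ioc, max_sub_min_eq_abs, abs_sub_comm]
  have key : ∑ i ∈ Finset.range n, MeasureTheory.volume (A i) ≤ (c : ENNReal) := by
    have h1 : ∀ i ∈ Finset.range n, MeasureTheory.volume (A i)
        = ∫⁻ s, (A i).indicator (fun _ => (1:ENNReal)) s := by
      intro i _
      rw [← MeasureTheory.lintegral_indicator_one (hmeas i)]
      rfl
    rw [Finset.sum_congr rfl h1,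
      ← MeasureTheory.lintegral_finset_sum _ (fun i _ => (measurable_const.indicator (hmeas i)))]
    calc ∫⁻ s, ∑ i ∈ Finset.range n, (A i).indicator (fun _ => (1:ENNReal)) s
        ≤ ∫⁻ s, (Set.Ioc (0:ℝ) 1).indicator (fun _ => (c:ENNReal)) s := by
          apply MeasureTheory.lintegral_mono
          intro t
          show ∑ i ∈ Finset.range n, (A i).indicator (fun _ => (1:ENNReal)) t
              ≤ (Set.Ioc (0:ℝ) 1).indicator (fun _ => (c:ENNReal)) t
          by_cases ht : t ∈ Set.Ioc (0:ℝ) 1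
          · rw [Set.indicator_of_mem ht]
            have heq : ∑ i ∈ Finset.range n, (A i).indicator (fun _ => (1:ENNReal)) t
                = ((Finset.range n).filter (fun i => t ∈ A i)).card := by
              simp only [Set.indicator_apply]
              rw [Finset.sum_boole]
            rw [heq]
            have : ((Finset.range n).filter (fun i => t ∈ A i)).card ≤ c := by
              have : (Finset.range n).filter (fun i => t ∈ A i)
                  = (Finset.range n).filter
                    (fun i => a i < t ∧ t ≤ a (i+1) ∨ a (i+1) < t ∧ t ≤ a i) := by
                apply Finset.filter_congr
                intro i _
                simp [hmemA t i]
              rw [this]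
              exact hcard t n
            exact_mod_cast Nat.cast_le.mpr this
          · rw [Set.indicator_of_notMem ht]
            have : ∀ i ∈ Finset.range n, (A i).indicator (fun _ => (1:ENNReal)) t = 0 := by
              intro i _
              rw [Set.indicator_of_notMem]
              intro hmem
              apply ht
              rw [hA] at hmem
              simp only [Set.mem_Ioc] at hmem ⊢
              have h0 := (ha i).1
              have h1 := (ha i).2
              have h2 := (ha (i+1)).1
              have h3 := (ha (i+1)).2
              constructor
              · calc (0:ℝ) ≤ min (a i) (a (i+1)) := le_min h0 h2
                  _ < t := hmem.1
              · calc t ≤ max (a i) (a (i+1)) := hmem.2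
                  _ ≤ 1 := max_le h1 h3
            rw [Finset.sum_eq_zero this]
      _ = (c:ENNReal) * MeasureTheory.volume (Set.Ioc (0:ℝ) 1) :=
          MeasureTheory.lintegral_indicator_const measurableSet_Ioc _
      _ ≤ (c:ENNReal) := by
          rw [Real.volume_Ioc]
          norm_num
  have hfin : ∀ i ∈ Finset.range n, MeasureTheory.volume (A i) ≠ ⊤ := by
    intro i _
    rw [hvol]
    exact ENNReal.ofReal_ne_top
  have heq : ∑ i ∈ Finset.range n, |a i - a (i+1)|
      = (∑ i ∈ Finset.range n, MeasureTheory.volume (A i)).toReal := by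
    rw [ENNReal.toReal_sum hfin]
    apply Finset.sum_congr rfl
    intro i _
    rw [hvol, ENNReal.toReal_ofReal (abs_nonneg _)]
  rw [heq]
  calc (∑ i ∈ Finset.range n, MeasureTheory.volume (A i)).toReal
      ≤ ((c : ENNReal)).toReal := ENNReal.toReal_mono (by simp) key
    _ = (c : ℝ) := by simp

theorem stmt_0 {X : Type*} (f : ℕ → X → ℝ)
    (hf : ∀ i x, f i x ∈ Set.Icc (0 : ℝ) 1)
    (N : ℕ) (E : Finset ℕ) (hE : E ⊆ Finset.range N)
    (hblock : ∀ i : Fin N → ℕ, StrictMono i → ∀ r s : ℝ, r < s →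
      ¬ ∃ x : X, (∀ j : Fin N, (j : ℕ) ∈ E → f (i j) x ≤ r) ∧
        (∀ j : Fin N, (j : ℕ) ∉ E → s ≤ f (i j) x)) :
    ∀ x : X, ∑' i : ℕ, |f i x - f (i + 1) x| ≤ 2 * N - 2 := by
  intro x
  by_cases hN0 : N = 0
  · exfalso
    subst hN0
    exact hblock (fun j => j.elim0) (fun j => j.elim0) 0 1 one_pos
      ⟨x, fun j => j.elim0, fun j => j.elim0⟩
  have hN : 1 ≤ N := Nat.one_le_iff_ne_zero.mpr hN0
  set a : ℕ → ℝ := fun i => f i x with ha_def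
  have habs : ∀ g : Fin (2*N) → ℕ, StrictMono g → ∀ r s : ℝ, r < s → ∀ b : ℕ, b ≤ 1 →
      ¬ (∀ k : Fin (2*N), ((k.val + b) % 2 = 0 → a (g k) ≤ r) ∧
          ((k.val + b) % 2 = 1 → s ≤ a (g k))) := by
    intro g hg r s hrs b hb hpat
    refine hblock (fun j : Fin N => g ⟨2*j.val + (if (j:ℕ) ∈ E then b else 1-b),
        by have := j.isLt; split <;> omega⟩) ?_ r s hrs ⟨x, ?_, ?_⟩
    · intro j1 j2 hlt
      apply hg
      have h1 := j1.isLt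
      have h2 := j2.isLt
      have hlt' : (j1:ℕ) < j2 := hlt
      simp only [Fin.mk_lt_mk]
      split <;> split <;> omega
    · intro j hj
      simp only [if_pos hj]
      exact (hpat _).1 (by simp only []; omega)
    · intro j hj
      simp only [if_neg hj]
      exact (hpat _).2 (by simp only []; omega)
  have hcard := aux_card hN habs
  have hsum := aux_sum (fun i => hf i x) hcard
  have hle := Real.tsum_le_of_sum_range_le
    (f := fun i => |a i - a (i+1)|) (fun i => abs_nonneg _) hsum
  have hcast : ((2*N - 2 : ℕ) : ℝ) = 2 * (N:ℝ) - 2 := by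
    have h2 : (2:ℕ) ≤ 2*N := by omega
    push_cast [Nat.cast_sub h2]
    ring
  calc ∑' i : ℕ, |f i x - f (i + 1) x| ≤ ((2*N - 2 : ℕ) : ℝ) := hle
    _ = 2 * (N:ℝ) - 2 := hcast
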